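/- For every graph G without a perfect matching, there exists a set X of vertices such that every odd-order component of G − X is hypomatchable and the number of odd-order components of G − X exceeds |X|. -/

import Mathlib

open SimpleGraph

/-- A graph is hypomatchable if deleting any single vertex leaves a graph with a
perfect matching. -/
def Hypomatchable {α : Type*} (H : SimpleGraph α) : Prop :=
  ∀ v : α, ∃ M : (H.induce {w | w ≠ v}).Subgraph, M.IsPerfectMatching

section EdmondsGallaiAux

open Set

set_option linter.unusedSectionVars false

variable {V : Type*} [Fintype V] {G : SimpleGraph V}

def IsComp (G : SimpleGraph V) (s A : Set V) : Prop :=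
  A ⊆ s ∧ A.Nonempty ∧ (∀ a ∈ A, ∀ b ∈ s, G.Adj a b → b ∈ A) ∧
    ∀ (a b : s), ↑a ∈ A → ↑b ∈ A → (G.induce s).Reachable a b

def MatchSet (G : SimpleGraph V) (B : Set V) : Prop :=
  ∃ M : G.Subgraph, M.IsMatching ∧ M.verts = B

lemma matchSet_empty : MatchSet G ∅ :=
  ⟨⊥, fun v hv => by simp at hv, rfl⟩

lemma mem_of_reachable_closed {s A : Set V} (hclosed : ∀ a ∈ A, ∀ b ∈ s, G.Adj a b → b ∈ A)
    {a b : s} (ha : ↑a ∈ A) (h : (G.induce s).Reachable a b) : ↑b ∈ A := by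
  obtain ⟨w⟩ := h
  induction w with
  | nil => exact ha
  | cons h p ih => exact ih (hclosed _ ha _ (by simp) h)

lemma reachable_induce_mono {s t : Set V} (hst : t ⊆ s) {a b : t}
    (h : (G.induce t).Reachable a b) :
    (G.induce s).Reachable ⟨a, hst a.2⟩ ⟨b, hst b.2⟩ := by
  obtain ⟨w⟩ := h
  induction w with
  | nil => exact Reachable.refl _
  | cons h p ih => exact (Reachable.refl _).trans ((Adj.reachable (by exact h)).trans ih)

lemma reachable_induce_of_closed {s A : Set V} (hAs : A ⊆ s)
    (hclosed : ∀ a ∈ A, ∀ b ∈ s, G.Adj a b → b ∈ A) {a b : s} (ha : ↑a ∈ A) (hb : ↑b ∈ A)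
    (h : (G.induce s).Reachable a b) : (G.induce A).Reachable ⟨a, ha⟩ ⟨b, hb⟩ := by
  obtain ⟨w⟩ := h
  induction w with
  | nil => exact Reachable.refl _
  | cons h p ih =>
    rename_i u c _
    have hc : ↑c ∈ A := hclosed _ ha _ (by simp) h
    exact ((show (G.induce A).Adj ⟨_, ha⟩ ⟨_, hc⟩ from h).reachable).trans (ih hc hb)

/-- the `IsComp` sets are exactly images of component supports -/
lemma isComp_supp (s : Set V) (c : (G.induce s).ConnectedComponent) :
    IsComp G s (Subtype.val '' c.supp) := by
  refine ⟨by rintro _ ⟨a, _, rfl⟩; exact a.2, ?_, ?_, ?_⟩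
  · obtain ⟨a, ha⟩ := c.exists_rep
    exact ⟨a, ⟨a, by rw [ConnectedComponent.mem_supp_iff]; exact ha, rfl⟩⟩
  · rintro _ ⟨a, ha, rfl⟩ b hb hadj
    refine ⟨⟨b, hb⟩, ?_, rfl⟩
    rw [ConnectedComponent.mem_supp_iff] at ha ⊢
    rw [← ha]
    exact ConnectedComponent.connectedComponentMk_eq_of_adj (by exact hadj.symm)
  · rintro a b ⟨a', ha', haa⟩ ⟨b', hb', hbb⟩
    obtain rfl : a' = a := Subtype.val_injective haa
    obtain rfl : b' = b := Subtype.val_injective hbb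
    rw [ConnectedComponent.mem_supp_iff] at ha' hb'
    exact ConnectedComponent.exact (ha'.trans hb'.symm)

lemma IsComp.exists_comp {s A : Set V} (h : IsComp G s A) :
    ∃ c : (G.induce s).ConnectedComponent, A = Subtype.val '' c.supp := by
  obtain ⟨hAs, ⟨a₀, ha₀⟩, hclosed, hconn⟩ := h
  refine ⟨(G.induce s).connectedComponentMk ⟨a₀, hAs ha₀⟩, ?_⟩
  ext x
  constructor
  · intro hx
    exact ⟨⟨x, hAs hx⟩, by
      rw [ConnectedComponent.mem_supp_iff, ConnectedComponent.eq]
      exact hconn _ _ hx ha₀, rfl⟩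
  · rintro ⟨x', hx', rfl⟩
    rw [ConnectedComponent.mem_supp_iff, ConnectedComponent.eq] at hx'
    exact mem_of_reachable_closed hclosed ha₀ hx'.symm

lemma matchSet_iff_pm {B : Set V} :
    MatchSet G B ↔ ∃ M : (G.induce B).Subgraph, M.IsPerfectMatching := by
  constructor
  · rintro ⟨M, hM, hMv⟩
    refine ⟨⟨univ, fun a b => M.Adj ↑a ↑b, fun h => M.adj_sub h, fun _ => mem_univ _,
      ⟨fun a b h => h.symm⟩⟩, fun a _ => ?_, fun a => mem_univ _⟩
    obtain ⟨w, hw1, hw2⟩ := hM (show ↑a ∈ M.verts from hMv ▸ a.2)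
    refine ⟨⟨w, hMv ▸ M.edge_vert hw1.symm⟩, hw1, fun y hy => ?_⟩
    exact Subtype.val_injective (hw2 _ hy)
  · rintro ⟨M, hM, hMsp⟩
    refine ⟨⟨B, fun v w => ∃ (hv : v ∈ B) (hw : w ∈ B), M.Adj ⟨v, hv⟩ ⟨w, hw⟩, ?_, ?_, ?_⟩,
      ?_, rfl⟩
    · rintro v w ⟨hv, hw, h⟩
      exact M.adj_sub h
    · rintro v w ⟨hv, _, _⟩
      exact hv
    · constructor; rintro v w ⟨hv, hw, h⟩
      exact ⟨hw, hv, h.symm⟩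
    · rintro v (hv : v ∈ B)
      obtain ⟨w, hw1, hw2⟩ := hM (hMsp ⟨v, hv⟩)
      refine ⟨↑w, ⟨hv, w.2, by simpa using hw1⟩, ?_⟩
      rintro y ⟨hv', hy, hadj⟩
      have := hw2 ⟨y, hy⟩ hadj
      exact congrArg Subtype.val this

lemma pm_transfer {α β : Type*} {H : SimpleGraph α} {H' : SimpleGraph β} (f : H ≃g H')
    (h : ∃ M : H.Subgraph, M.IsPerfectMatching) : ∃ M : H'.Subgraph, M.IsPerfectMatching := by
  obtain ⟨M, hM, hMsp⟩ := h
  refine ⟨M.map f.toHom, hM.map f.toHom f.injective, fun v => ?_⟩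
  exact ⟨f.symm v, hMsp _, by simp⟩

/-- flattening iso for nested induced subgraphs -/
noncomputable def flattenIso (G : SimpleGraph V) (s : Set V) (t : Set ↥s) :
    ((G.induce s).induce t) ≃g G.induce (Subtype.val '' t) :=
  { Equiv.Set.image Subtype.val t Subtype.val_injective with
    map_rel_iff' := by
      intro a b
      simp only [Equiv.toFun_as_coe, Equiv.Set.image_apply, comap_adj, Function.Embedding.coe_subtype]
      try rfl }

lemma hypomatchable_transfer {α β : Type*} {H : SimpleGraph α} {H' : SimpleGraph β}
    (f : H ≃g H') (h : Hypomatchable H) : Hypomatchable H' := by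
  intro v
  refine pm_transfer ?_ (h (f.symm v))
  exact { Equiv.subtypeEquiv f.toEquiv (fun w => by
            simp only [Set.mem_setOf_eq, ne_eq]
            exact not_congr f.toEquiv.eq_symm_apply) with
          map_rel_iff' := by
            intro a b
            exact f.map_rel_iff }

lemma hypomatchable_of_matchSet {A : Set V} (h : ∀ v ∈ A, MatchSet G (A \ {v})) :
    Hypomatchable (G.induce A) := by
  intro v
  have hm := matchSet_iff_pm.mp (h ↑v v.2)
  refine pm_transfer ?_ hm
  exact { toFun := fun u => ⟨⟨↑u, u.2.1⟩, fun he => u.2.2 (by exact congrArg Subtype.val he)⟩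
          invFun := fun w => ⟨↑↑w, ⟨(w : ↥A).2, fun he => w.2 (Subtype.val_injective (by exact he))⟩⟩
          left_inv := fun u => by ext; rfl
          right_inv := fun w => by ext; rfl
          map_rel_iff' := Iff.rfl }

def OC (G : SimpleGraph V) (s : Set V) : Set (Set V) := {A | IsComp G s A ∧ Odd A.ncard}

lemma IsComp.eq_of_inter {s A B : Set V} (hA : IsComp G s A) (hB : IsComp G s B)
    (h : (A ∩ B).Nonempty) : A = B := by
  obtain ⟨x, hxA, hxB⟩ := h
  apply Set.Subset.antisymm
  · intro a ha
    exact mem_of_reachable_closed hB.2.2.1 hxB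
      (hA.2.2.2 ⟨x, hA.1 hxA⟩ ⟨a, hA.1 ha⟩ hxA ha)
  · intro b hb
    exact mem_of_reachable_closed hA.2.2.1 hxA
      (hB.2.2.2 ⟨x, hB.1 hxB⟩ ⟨b, hB.1 hb⟩ hxB hb)

lemma oc_card_eq (s : Set V) :
    {c : (G.induce s).ConnectedComponent | Odd c.supp.ncard}.ncard = (OC G s).ncard := by
  have himg : OC G s = (fun c : (G.induce s).ConnectedComponent => Subtype.val '' c.supp) ''
      {c | Odd c.supp.ncard} := by
    ext A
    constructor
    · rintro ⟨hA, hodd⟩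
      obtain ⟨c, rfl⟩ := hA.exists_comp
      exact ⟨c, by rwa [Set.ncard_image_of_injective _ Subtype.val_injective] at hodd, rfl⟩
    · rintro ⟨c, hc, rfl⟩
      exact ⟨isComp_supp s c, by rwa [Set.ncard_image_of_injective _ Subtype.val_injective]⟩
  rw [himg, Set.ncard_image_of_injective]
  intro c c' h
  exact ConnectedComponent.supp_injective
    (Set.image_injective.mpr Subtype.val_injective h)

lemma exists_isComp_mem {s : Set V} {a : V} (ha : a ∈ s) : ∃ A, IsComp G s A ∧ a ∈ A :=
  ⟨_, isComp_supp s ((G.induce s).connectedComponentMk ⟨a, ha⟩),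
    ⟨⟨a, ha⟩, rfl, rfl⟩⟩

lemma oc_parity (s : Set V) : Odd (OC G s).ncard ↔ Odd s.ncard := by
  rw [← oc_card_eq]
  have h2 : {c : (G.induce s).ConnectedComponent | Odd c.supp.ncard}
      = {c | Odd (Nat.card c.supp)} := by
    ext c; rw [Set.mem_setOf_eq, Set.mem_setOf_eq, Nat.card_coe_set_eq]
  rw [h2, ← Nat.card_coe_set_eq, show s.ncard = Nat.card ↥s from
    (Nat.card_coe_set_eq s).symm]
  simpa [Nat.card_coe_set_eq] using (odd_ncard_oddComponents (G := G.induce s))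

lemma comps_decomp {s A Y : Set V} (hA : IsComp G s A) (hY : Y ⊆ A) :
    {B | IsComp G (s \ Y) B} = ({B | IsComp G s B} \ {A}) ∪ {B | IsComp G (A \ Y) B} := by
  have hAs : A ⊆ s := hA.1
  have hclosedAY : ∀ a ∈ A \ Y, ∀ b ∈ s \ Y, G.Adj a b → b ∈ A \ Y := by
    rintro a ⟨haA, _⟩ b ⟨hbs, hbY⟩ hadj
    exact ⟨hA.2.2.1 a haA b hbs hadj, hbY⟩
  ext B
  simp only [Set.mem_setOf_eq, Set.mem_union, Set.mem_diff, Set.mem_singleton_iff]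
  constructor
  · intro hB
    by_cases hint : (B ∩ A).Nonempty
    · right
      obtain ⟨x, hxB, hxA⟩ := hint
      have hxAY : x ∈ A \ Y := ⟨hxA, (hB.1 hxB).2⟩
      have hBsub : B ⊆ A \ Y := by
        intro b hb
        exact mem_of_reachable_closed hclosedAY hxAY
          (hB.2.2.2 ⟨x, hB.1 hxB⟩ ⟨b, hB.1 hb⟩ hxB hb)
      refine ⟨hBsub, hB.2.1, ?_, ?_⟩
      · intro a ha b hb hadj
        exact hB.2.2.1 a ha b ⟨hAs hb.1, hb.2⟩ hadj
      · intro a b ha hb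
        exact reachable_induce_of_closed (Set.diff_subset_diff_left hAs) hclosedAY
          (hBsub ha) (hBsub hb)
          (hB.2.2.2 ⟨↑a, Set.diff_subset_diff_left hAs a.2⟩
            ⟨↑b, Set.diff_subset_diff_left hAs b.2⟩ ha hb)
    · left
      rw [Set.not_nonempty_iff_eq_empty] at hint
      have hBA : ∀ b ∈ B, b ∉ A := fun b hb hbA =>
        (Set.eq_empty_iff_forall_notMem.mp hint b) ⟨hb, hbA⟩
      have hclosed : ∀ a ∈ B, ∀ b ∈ s, G.Adj a b → b ∈ B := by
        intro a ha b hbs hadj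
        have hbY : b ∉ Y := by
          intro hbY
          exact hBA a ha (hA.2.2.1 b (hY hbY) a (hB.1 ha).1 hadj.symm)
        exact hB.2.2.1 a ha b ⟨hbs, hbY⟩ hadj
      refine ⟨⟨fun b hb => (hB.1 hb).1, hB.2.1, hclosed, ?_⟩, ?_⟩
      · intro a b ha hb
        exact reachable_induce_mono Set.diff_subset
          (hB.2.2.2 ⟨↑a, ⟨a.2, (hB.1 ha).2⟩⟩ ⟨↑b, ⟨b.2, (hB.1 hb).2⟩⟩ ha hb)
      · rintro rfl
        obtain ⟨x, hx⟩ := hB.2.1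
        exact hBA x hx hx
  · rintro (⟨hB, hne⟩ | hB)
    · have hdisj : B ∩ A = ∅ := by
        by_contra hcon
        exact hne (hB.eq_of_inter hA (Set.nonempty_iff_ne_empty.mpr hcon))
      have hBsub : B ⊆ s \ Y := by
        intro b hb
        refine ⟨hB.1 hb, fun hbY => ?_⟩
        exact Set.eq_empty_iff_forall_notMem.mp hdisj b ⟨hb, hY hbY⟩
      refine ⟨hBsub, hB.2.1, ?_, ?_⟩
      · intro a ha b hb hadj
        exact hB.2.2.1 a ha b hb.1 hadj
      · intro a b ha hb
        have hr := hB.2.2.2 ⟨↑a, hB.1 ha⟩ ⟨↑b, hB.1 hb⟩ ha hb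
        have := reachable_induce_of_closed hB.1 hB.2.2.1 ha hb hr
        exact reachable_induce_mono hBsub this
    · have hBsub : B ⊆ s \ Y := fun b hb =>
        ⟨hAs (hB.1 hb).1, (hB.1 hb).2⟩
      refine ⟨hBsub, hB.2.1, ?_, ?_⟩
      · intro a ha b hb hadj
        exact hB.2.2.1 a ha b (hclosedAY a (hB.1 ha) b hb hadj) hadj
      · intro a b ha hb
        exact reachable_induce_mono (Set.diff_subset_diff_left hAs)
          (hB.2.2.2 ⟨↑a, hB.1 ha⟩ ⟨↑b, hB.1 hb⟩ ha hb)

lemma oc_decomp {s A Y : Set V} (hA : IsComp G s A) (hY : Y ⊆ A) :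
    OC G (s \ Y) = ((OC G s) \ {A}) ∪ OC G (A \ Y) := by
  ext B
  have := Set.ext_iff.mp (comps_decomp hA hY) B
  simp only [OC, Set.mem_setOf_eq, Set.mem_union, Set.mem_diff, Set.mem_singleton_iff] at *
  tauto

lemma oc_decomp_disjoint {s A Y : Set V} (hA : IsComp G s A) :
    Disjoint ((OC G s) \ {A}) (OC G (A \ Y)) := by
  rw [Set.disjoint_left]
  rintro B ⟨⟨hB, _⟩, hBA⟩ ⟨hB', _⟩
  obtain ⟨x, hx⟩ := hB'.2.1
  exact hBA (hB.eq_of_inter hA ⟨x, hx, (hB'.1 hx).1⟩)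

lemma oc_card_decomp_odd {s A Y : Set V} (hA : IsComp G s A) (hY : Y ⊆ A)
    (hodd : Odd A.ncard) :
    (OC G (s \ Y)).ncard + 1 = (OC G s).ncard + (OC G (A \ Y)).ncard := by
  rw [oc_decomp hA hY, Set.ncard_union_eq (oc_decomp_disjoint hA) (Set.toFinite _)
    (Set.toFinite _)]
  have hmem : A ∈ OC G s := ⟨hA, hodd⟩
  have := Set.ncard_diff_singleton_add_one hmem (Set.toFinite _)
  omega

lemma oc_card_decomp_even {s A Y : Set V} (hA : IsComp G s A) (hY : Y ⊆ A)
    (heven : ¬ Odd A.ncard) :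
    (OC G (s \ Y)).ncard = (OC G s).ncard + (OC G (A \ Y)).ncard := by
  rw [oc_decomp hA hY, Set.ncard_union_eq (oc_decomp_disjoint hA) (Set.toFinite _)
    (Set.toFinite _), Set.diff_singleton_eq_self (fun h => heven h.2)]

lemma matchSet_iUnion {ι : Type*} (B : ι → Set V) (h : ∀ i, MatchSet G (B i))
    (hd : Pairwise fun i j => Disjoint (B i) (B j)) : MatchSet G (⋃ i, B i) := by
  choose M hM hMv using h
  refine ⟨⨆ i, M i, Subgraph.IsMatching.iSup hM fun i j hij => by
    simpa [(hM i).support_eq_verts, (hM j).support_eq_verts, hMv i, hMv j] using hd hij, ?_⟩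
  rw [Subgraph.verts_iSup]
  exact Set.iUnion_congr hMv

lemma matchSet_pair {a x : V} (h : G.Adj a x) : MatchSet G {a, x} :=
  ⟨G.subgraphOfAdj h, Subgraph.IsMatching.subgraphOfAdj h, by simp⟩

lemma matchSet_union {B C : Set V} (hB : MatchSet G B) (hC : MatchSet G C)
    (hdisj : Disjoint B C) : MatchSet G (B ∪ C) := by
  obtain ⟨M, hM, hMv⟩ := hB
  obtain ⟨N, hN, hNv⟩ := hC
  refine ⟨M ⊔ N, hM.sup hN ?_, by rw [Subgraph.verts_sup, hMv, hNv]⟩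
  rw [hM.support_eq_verts, hN.support_eq_verts, hMv, hNv]
  exact hdisj

lemma exists_max_deficiency (G : SimpleGraph V) (s : Set V) :
    ∃ T₀ ⊆ s,
      (∀ T ⊆ s, ((OC G (s \ T)).ncard : ℤ) - T.ncard
        ≤ ((OC G (s \ T₀)).ncard : ℤ) - T₀.ncard) ∧
      (∀ T ⊆ s, ((OC G (s \ T)).ncard : ℤ) - T.ncard
        = ((OC G (s \ T₀)).ncard : ℤ) - T₀.ncard → T.ncard ≤ T₀.ncard) := by
  classical
  set D : Set V → ℤ := fun T => ((OC G (s \ T)).ncard : ℤ) - T.ncard with hD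
  set K : ℤ := (Fintype.card V : ℤ) + 1 with hK
  have hcardlt : ∀ T : Set V, (T.ncard : ℤ) < K := by
    intro T
    have : T.ncard ≤ Fintype.card V := by
      have := Set.ncard_le_ncard (Set.subset_univ T) (Set.toFinite _)
      rwa [Set.ncard_univ, Nat.card_eq_fintype_card] at this
    omega
  set f : Set V → ℤ := fun T => D T * K + T.ncard with hf
  have hfin : ({T : Set V | T ⊆ s}).Finite := Set.toFinite _
  obtain ⟨T₀, hT₀mem, hT₀max⟩ := Finset.exists_max_image hfin.toFinset f
    ⟨∅, by simp⟩
  rw [Set.Finite.mem_toFinset] at hT₀mem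
  have hmaxf : ∀ T ⊆ s, f T ≤ f T₀ := fun T hT =>
    hT₀max T (by rwa [Set.Finite.mem_toFinset])
  have hDle : ∀ T ⊆ s, D T ≤ D T₀ := by
    intro T hT
    by_contra hlt
    push_neg at hlt
    have h1 : D T₀ + 1 ≤ D T := by omega
    have h2 := hmaxf T hT
    simp only [hf] at h2
    have h3 := hcardlt T₀
    have h4 : (0 : ℤ) ≤ T.ncard := Int.natCast_nonneg _
    have h5 : (0 : ℤ) < K := by positivity
    have h6 : (D T₀ + 1) * K ≤ D T * K := mul_le_mul_of_nonneg_right h1 h5.le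
    rw [add_mul, one_mul] at h6
    linarith
  refine ⟨T₀, hT₀mem, hDle, ?_⟩
  intro T hT hEq
  have hEq' : D T = D T₀ := hEq
  have := hmaxf T hT
  simp only [hf] at this
  rw [hEq'] at this
  omega

theorem aux_main (G : SimpleGraph V) : ∀ (n : ℕ) (s : Set V), s.ncard ≤ n → ¬ MatchSet G s →
    ∃ T ⊆ s, (∀ A, IsComp G (s \ T) A → Odd A.ncard → ∀ v ∈ A, MatchSet G (A \ {v})) ∧
      T.ncard < (OC G (s \ T)).ncard := by
  intro n
  induction n with
  | zero =>
    intro s hs hns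
    rw [Nat.le_zero, Set.ncard_eq_zero (Set.toFinite s)] at hs
    exact absurd (hs ▸ matchSet_empty) hns
  | succ n ih =>
    intro s hs hns
    classical
    obtain ⟨T₀, hT₀s, hmax1, hmax2⟩ := exists_max_deficiency G s
    -- Claim A : odd components of s \ T₀ are hypomatchable (in MatchSet terms)
    have claimA : ∀ A, IsComp G (s \ T₀) A → Odd A.ncard → ∀ v ∈ A, MatchSet G (A \ {v}) := by
      intro A hA hodd v hv
      by_contra hnm
      have hAs' : A ⊆ s \ T₀ := hA.1
      have hAsub : A ⊆ s := fun a ha => (hAs' ha).1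
      have hvs : v ∈ s := hAsub hv
      -- A \ {v} is strictly smaller than s
      have hss : A \ {v} ⊂ s :=
        ⟨fun a ha => hAsub ha.1, fun hcon => (hcon hvs).2 rfl⟩
      have hle : (A \ {v}).ncard ≤ n := by
        have := Set.ncard_lt_ncard hss (Set.toFinite s)
        omega
      obtain ⟨T', hT'sub, -, hT'lt⟩ := ih (A \ {v}) hle hnm
      -- parity gives at least |T'| + 2 odd components
      have hkey : T'.ncard + 2 ≤ (OC G ((A \ {v}) \ T')).ncard := by
        have hpar := oc_parity (G := G) ((A \ {v}) \ T')
        have h1 : ((A \ {v}) \ T').ncard + T'.ncard = (A \ {v}).ncard := by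
          rw [Set.ncard_diff_add_ncard_of_subset hT'sub (Set.toFinite _)]
        have h2 : (A \ {v}).ncard + 1 = A.ncard :=
          Set.ncard_diff_singleton_add_one hv (Set.toFinite _)
        rw [Nat.odd_iff, Nat.odd_iff] at hpar
        rw [Nat.odd_iff] at hodd
        omega
      -- the enlarged cut
      set Y : Set V := {v} ∪ T' with hY
      have hYA : Y ⊆ A := by
        rintro y (rfl | hy)
        · exact hv
        · exact (hT'sub hy).1
      set T₁ : Set V := T₀ ∪ Y with hT₁
      have hT₁s : T₁ ⊆ s := Set.union_subset hT₀s (hYA.trans hAsub)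
      have hsT₁ : s \ T₁ = (s \ T₀) \ Y := by rw [hT₁, Set.diff_diff]
      have hAY : A \ Y = (A \ {v}) \ T' := by rw [hY, Set.diff_diff]
      have hcard := oc_card_decomp_odd hA hYA hodd
      rw [← hsT₁, hAY] at hcard
      have hT₀Y : Disjoint T₀ Y := by
        rw [Set.disjoint_right]
        intro y hy
        exact fun hyT₀ => ((hAs' (hYA hy)).2) hyT₀
      have hvT' : v ∉ T' := fun hc => (hT'sub hc).2 rfl
      have hT₁card : T₁.ncard = T₀.ncard + T'.ncard + 1 := by
        rw [hT₁, Set.ncard_union_eq hT₀Y (Set.toFinite _) (Set.toFinite _), hY,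
          Set.singleton_union, Set.ncard_insert_of_notMem hvT' (Set.toFinite _)]
        omega
      have hD1 := hmax1 T₁ hT₁s
      have hD2 := hmax2 T₁ hT₁s
      omega
    -- Claim B : even components of s \ T₀ have a perfect matching
    have claimB : ∀ A, IsComp G (s \ T₀) A → ¬ Odd A.ncard → MatchSet G A := by
      intro A hA heven
      by_contra hnm
      have hAs' : A ⊆ s \ T₀ := hA.1
      have hAsub : A ⊆ s := fun a ha => (hAs' ha).1
      by_cases hAeq : A = s
      · -- then T₀ = ∅ and s is a single even component; a single vertex cut does better
        have hT₀e : T₀ = ∅ := by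
          rw [Set.eq_empty_iff_forall_notMem]
          intro x hx
          exact (hAs' (hAeq ▸ hT₀s hx)).2 hx
        obtain ⟨v, hv⟩ := hA.2.1
        have hvs : v ∈ s := hAsub hv
        -- OC G (s \ T₀) is empty
        have hOC0 : (OC G (s \ T₀)).ncard = 0 := by
          rw [Set.ncard_eq_zero (Set.toFinite _), Set.eq_empty_iff_forall_notMem]
          rintro B ⟨hB, hBodd⟩
          obtain ⟨b, hb⟩ := hB.2.1
          have : B = A := hB.eq_of_inter hA ⟨b, hb, by
            rw [hAeq]; rw [hT₀e, Set.diff_empty] at hB; exact hB.1 hb⟩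
          exact heven (this ▸ hBodd)
        -- s \ {v} has odd cardinality, hence at least one odd component
        have hpar := oc_parity (G := G) (s \ {v})
        have h2 : (s \ {v}).ncard + 1 = s.ncard :=
          Set.ncard_diff_singleton_add_one hvs (Set.toFinite _)
        have hsA : ¬ Odd s.ncard := hAeq ▸ heven
        have hOC1 : 1 ≤ (OC G (s \ {v})).ncard := by
          simp only [Nat.odd_iff] at hpar hsA
          omega
        have hD1 := hmax1 {v} (Set.singleton_subset_iff.mpr hvs)
        have hD2 := hmax2 {v} (Set.singleton_subset_iff.mpr hvs)
        rw [Set.ncard_singleton] at hD1 hD2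
        rw [hT₀e, Set.ncard_empty] at hD1 hD2
        rw [hT₀e, Set.diff_empty] at hOC0
        rw [Set.diff_empty] at hD1 hD2
        omega
      · -- A is a proper subset of s; apply the induction hypothesis
        have hss : A ⊂ s := ⟨hAsub, fun hcon => hAeq (Set.Subset.antisymm hAsub hcon)⟩
        have hle : A.ncard ≤ n := by
          have := Set.ncard_lt_ncard hss (Set.toFinite s)
          omega
        obtain ⟨T', hT'sub, -, hT'lt⟩ := ih A hle hnm
        have hkey : T'.ncard + 2 ≤ (OC G (A \ T')).ncard := by
          have hpar := oc_parity (G := G) (A \ T')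
          have h1 : (A \ T').ncard + T'.ncard = A.ncard := by
            rw [Set.ncard_diff_add_ncard_of_subset hT'sub (Set.toFinite _)]
          simp only [Nat.odd_iff] at hpar
          simp only [Nat.odd_iff] at heven
          omega
        set T₁ : Set V := T₀ ∪ T' with hT₁
        have hT₁s : T₁ ⊆ s := Set.union_subset hT₀s (hT'sub.trans hAsub)
        have hsT₁ : s \ T₁ = (s \ T₀) \ T' := by rw [hT₁, Set.diff_diff]
        have hcard := oc_card_decomp_even hA hT'sub heven
        rw [← hsT₁] at hcard
        have hT₀T' : Disjoint T₀ T' := by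
          rw [Set.disjoint_right]
          intro y hy
          exact fun hyT₀ => ((hAs' (hT'sub hy)).2) hyT₀
        have hT₁card : T₁.ncard = T₀.ncard + T'.ncard := by
          rw [hT₁, Set.ncard_union_eq hT₀T' (Set.toFinite _) (Set.toFinite _)]
        have hD1 := hmax1 T₁ hT₁s
        omega
    -- Claim C : more odd components than |T₀|
    have claimC : T₀.ncard < (OC G (s \ T₀)).ncard := by
      by_contra hle
      push_neg at hle
      have hD0 := hmax1 ∅ (Set.empty_subset s)
      rw [Set.diff_empty, Set.ncard_empty] at hD0
      have heq : (OC G (s \ T₀)).ncard = T₀.ncard := by omega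
      haveI : Fintype ↥(OC G (s \ T₀)) := Fintype.ofFinite _
      set nbr : ↥(OC G (s \ T₀)) → Finset V := fun A =>
        (Set.toFinite {x | x ∈ T₀ ∧ ∃ a ∈ (A : Set V), G.Adj a x}).toFinset with hnbr
      have hnbr_mem : ∀ (A : ↥(OC G (s \ T₀))) (x : V),
          x ∈ nbr A ↔ x ∈ T₀ ∧ ∃ a ∈ (A : Set V), G.Adj a x := by
        intro A x
        rw [hnbr, Set.Finite.mem_toFinset]
        rfl
      have hHall : ∀ F : Finset ↥(OC G (s \ T₀)), F.card ≤ (F.biUnion nbr).card := by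
        intro F
        by_contra hF
        push_neg at hF
        set X' : Set V := ↑(F.biUnion nbr) with hX'
        have hX'T₀ : X' ⊆ T₀ := by
          intro x hx
          rw [hX', Finset.coe_biUnion] at hx
          simp only [Set.mem_iUnion] at hx
          obtain ⟨A, _, hxA⟩ := hx
          exact ((hnbr_mem A x).mp hxA).1
        have hsub : s \ T₀ ⊆ s \ X' := Set.diff_subset_diff_right hX'T₀
        have hmemOC : ∀ A : ↥(OC G (s \ T₀)), A ∈ F → (A : Set V) ∈ OC G (s \ X') := by
          rintro ⟨B, hB, hBodd⟩ hAF
          refine ⟨⟨hB.1.trans hsub, hB.2.1, ?_, ?_⟩, hBodd⟩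
          · intro a ha b hb hadj
            by_cases hbT₀ : b ∈ T₀
            · exfalso
              apply hb.2
              rw [hX', Finset.mem_coe, Finset.mem_biUnion]
              exact ⟨⟨B, hB, hBodd⟩, hAF, (hnbr_mem _ b).mpr ⟨hbT₀, a, ha, hadj⟩⟩
            · exact hB.2.2.1 a ha b ⟨hb.1, hbT₀⟩ hadj
          · intro a b ha hb
            have := hB.2.2.2 ⟨↑a, hB.1 ha⟩ ⟨↑b, hB.1 hb⟩ ha hb
            exact reachable_induce_mono hsub this
        have himg : Subtype.val '' (↑F : Set ↥(OC G (s \ T₀))) ⊆ OC G (s \ X') := by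
          rintro _ ⟨A, hAF, rfl⟩
          exact hmemOC A (Finset.mem_coe.mp hAF)
        have hcard1 : F.card ≤ (OC G (s \ X')).ncard := by
          have h1 : (Subtype.val '' (↑F : Set ↥(OC G (s \ T₀)))).ncard = F.card := by
            rw [Set.ncard_image_of_injective _ Subtype.val_injective, Set.ncard_coe_finset]
          rw [← h1]
          exact Set.ncard_le_ncard himg (Set.toFinite _)
        have hD := hmax1 X' (hX'T₀.trans hT₀s)
        have hX'card : X'.ncard = (F.biUnion nbr).card := Set.ncard_coe_finset _
        omega
      obtain ⟨f, hfinj, hfmem⟩ :=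
        (Finset.all_card_le_biUnion_card_iff_exists_injective nbr).mp hHall
      have hrange : Set.range f ⊆ T₀ := by
        rintro _ ⟨A, rfl⟩
        exact ((hnbr_mem A (f A)).mp (hfmem A)).1
      have hrangecard : (Set.range f).ncard = T₀.ncard := by
        rw [← Set.image_univ, Set.ncard_image_of_injective _ hfinj, Set.ncard_univ,
          Nat.card_coe_set_eq, heq]
      have hrangeeq : Set.range f = T₀ :=
        Set.eq_of_subset_of_ncard_le hrange (le_of_eq hrangecard.symm) (Set.toFinite _)
      -- construct a matching of all of s, contradiction
      haveI : Fintype ↥{B : Set V | IsComp G (s \ T₀) B} := Fintype.ofFinite _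
      set g : ↥{B : Set V | IsComp G (s \ T₀) B} → Set V := fun B =>
        if h : Odd B.1.ncard then B.1 ∪ {f ⟨B.1, ⟨B.2, h⟩⟩} else B.1 with hg
      have hBsub : ∀ B : ↥{B : Set V | IsComp G (s \ T₀) B}, B.1 ⊆ s \ T₀ := fun B => B.2.1
      have hmatch : ∀ B, MatchSet G (g B) := by
        intro B
        simp only [hg]
        by_cases h : Odd B.1.ncard
        · rw [dif_pos h]
          obtain ⟨hfT₀, a, haB, hadj⟩ := (hnbr_mem ⟨B.1, ⟨B.2, h⟩⟩ _).mp
            (hfmem ⟨B.1, ⟨B.2, h⟩⟩)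
          have hmS := claimA B.1 B.2 h a haB
          have hx : f ⟨B.1, ⟨B.2, h⟩⟩ ∉ B.1 := fun hc => (hBsub B hc).2 hfT₀
          have hd : Disjoint (B.1 \ {a}) {a, f ⟨B.1, ⟨B.2, h⟩⟩} := by
            rw [Set.disjoint_left]
            rintro y ⟨hyB, hya⟩ (rfl | rfl)
            · exact hya rfl
            · exact hx hyB
          have hun := matchSet_union hmS (matchSet_pair hadj) hd
          have hseteq : (B.1 \ {a}) ∪ {a, f ⟨B.1, ⟨B.2, h⟩⟩}
              = B.1 ∪ {f ⟨B.1, ⟨B.2, h⟩⟩} := by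
            ext y
            simp only [Set.mem_union, Set.mem_diff, Set.mem_singleton_iff, Set.mem_insert_iff]
            constructor
            · rintro (⟨hy, _⟩ | (rfl | rfl))
              · exact Or.inl hy
              · exact Or.inl haB
              · exact Or.inr rfl
            · rintro (hy | rfl)
              · by_cases hya : y = a
                · exact Or.inr (Or.inl hya)
                · exact Or.inl ⟨hy, hya⟩
              · exact Or.inr (Or.inr rfl)
          rwa [hseteq] at hun
        · rw [dif_neg h]
          exact claimB B.1 B.2 h
      have hdisj : Pairwise fun i j => Disjoint (g i) (g j) := by
        intro i j hij
        have hBne : i.1 ≠ j.1 := fun hc => hij (Subtype.ext hc)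
        have hBint : ∀ y, y ∈ i.1 → y ∈ j.1 → False := by
          intro y hyi hyj
          exact hBne (i.2.eq_of_inter j.2 ⟨y, hyi, hyj⟩)
        rw [Set.disjoint_left]
        intro y hyi hyj
        simp only [hg] at hyi hyj
        have hfi : ∀ (h : Odd i.1.ncard) (h' : Odd j.1.ncard),
            f ⟨i.1, ⟨i.2, h⟩⟩ ≠ f ⟨j.1, ⟨j.2, h'⟩⟩ := by
          intro h h' hc
          have h2 : (⟨i.1, ⟨i.2, h⟩⟩ : ↥(OC G (s \ T₀))) = ⟨j.1, ⟨j.2, h'⟩⟩ := hfinj hc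
          replace h2 := congrArg Subtype.val h2
          exact hBne h2
        by_cases hi : Odd i.1.ncard <;> by_cases hj : Odd j.1.ncard
        · rw [dif_pos hi] at hyi; rw [dif_pos hj] at hyj
          rcases hyi with hyi | rfl <;> rcases hyj with hyj | hyj
          · exact hBint y hyi hyj
          · exact (fun hc => (hBsub i hc).2 (((hnbr_mem _ _).mp (hfmem _)).1))
              (hyj ▸ hyi)
          · exact (fun hc => (hBsub j hc).2 (((hnbr_mem _ _).mp (hfmem _)).1)) hyj
          · exact hfi hi hj hyj
        · rw [dif_pos hi] at hyi; rw [dif_neg hj] at hyj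
          rcases hyi with hyi | rfl
          · exact hBint y hyi hyj
          · exact (hBsub j hyj).2 (((hnbr_mem _ _).mp (hfmem _)).1)
        · rw [dif_neg hi] at hyi; rw [dif_pos hj] at hyj
          rcases hyj with hyj | rfl
          · exact hBint y hyi hyj
          · exact (hBsub i hyi).2 (((hnbr_mem _ _).mp (hfmem _)).1)
        · rw [dif_neg hi] at hyi; rw [dif_neg hj] at hyj
          exact hBint y hyi hyj
      have hunion : (⋃ i, g i) = s := by
        apply Set.Subset.antisymm
        · apply Set.iUnion_subset
          intro i
          simp only [hg]
          by_cases h : Odd i.1.ncard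
          · rw [dif_pos h]
            refine Set.union_subset (fun y hy => (hBsub i hy).1) ?_
            rw [Set.singleton_subset_iff]
            exact hT₀s (((hnbr_mem _ _).mp (hfmem _)).1)
          · rw [dif_neg h]
            exact fun y hy => (hBsub i hy).1
        · intro v hv
          by_cases hvT₀ : v ∈ T₀
          · rw [← hrangeeq] at hvT₀
            obtain ⟨A, rfl⟩ := hvT₀
            refine Set.mem_iUnion.mpr ⟨⟨A.1, A.2.1⟩, ?_⟩
            simp only [hg]
            rw [dif_pos A.2.2]
            exact Or.inr rfl
          · obtain ⟨A, hA, hvA⟩ := exists_isComp_mem (G := G) (s := s \ T₀) ⟨hv, hvT₀⟩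
            refine Set.mem_iUnion.mpr ⟨⟨A, hA⟩, ?_⟩
            simp only [hg]
            by_cases h : Odd A.ncard
            · rw [dif_pos h]; exact Or.inl hvA
            · rw [dif_neg h]; exact hvA
      exact absurd (hunion ▸ matchSet_iUnion g hmatch hdisj) hns
    exact ⟨T₀, hT₀s, claimA, claimC⟩


end EdmondsGallaiAux

/-- (Edmonds–Gallai) For every graph `G` without a perfect matching there is a set `X` of
vertices such that every odd component of `G - X` is hypomatchable, and the number of odd
components of `G - X` exceeds `|X|`. -/
theorem stmt_6 {V : Type*} [Fintype V] (G : SimpleGraph V)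
    (h : ¬ ∃ M : G.Subgraph, M.IsPerfectMatching) :
    ∃ X : Set V,
      (∀ c : (G.induce Xᶜ).ConnectedComponent, Odd c.supp.ncard →
        Hypomatchable ((G.induce Xᶜ).induce c.supp)) ∧
      X.ncard < {c : (G.induce Xᶜ).ConnectedComponent | Odd c.supp.ncard}.ncard := by
  have hns : ¬ MatchSet G Set.univ := by
    rintro ⟨M, hM, hMv⟩
    exact h ⟨M, hM, fun v => hMv ▸ Set.mem_univ v⟩
  obtain ⟨T, hTs, hhyp, hlt⟩ := aux_main G (Set.univ.ncard) Set.univ le_rfl hns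
  have hcompl : Tᶜ = Set.univ \ T := Set.compl_eq_univ_diff T
  refine ⟨T, ?_, ?_⟩
  · rw [hcompl]
    intro c hodd
    have hA : IsComp G (Set.univ \ T) (Subtype.val '' c.supp) := isComp_supp _ c
    have hAodd : Odd (Subtype.val '' c.supp).ncard := by
      rwa [Set.ncard_image_of_injective _ Subtype.val_injective]
    have hH : Hypomatchable (G.induce (Subtype.val '' c.supp)) :=
      hypomatchable_of_matchSet (hhyp _ hA hAodd)
    exact hypomatchable_transfer (flattenIso G (Set.univ \ T) c.supp).symm hH
  · rw [hcompl, oc_card_eq]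
    exact hlt
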